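/- Let G be a broken wheel with principal path P = p₀ q p₁ and let L be a list-assignment for G with |L(v)| ≥ 3 for every v ∈ V(G) \ {p₀, q, p₁} and with L(p₀), L(p₁) nonempty. Let φ be an L-coloring of {p₀, p₁} and let S ⊆ L(q) \ {φ(p₀), φ(p₁)} with |S| ≥ 2 such that for every s ∈ S there is no L-coloring of G assigning φ(p₀), s, φ(p₁) to p₀, q, p₁ respectively. Then: (i) |S| = 2 and the path G − q has an odd number of edges; and (ii) every L-coloring ψ of V(P) which does not extend to an L-coloring of G satisfies either ψ(p₀) = ψ(p₁) = s for some s ∈ S, or (ψ(p₀), ψ(p₁)) = (φ(p₀), φ(p₁)). -/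

import Mathlib

/-- Vertex type of a broken wheel whose hub-deleted path `p₀ u₁ … u_t p₁` has `t + 2`
vertices: `some i` is the `i`-th path vertex (so `some 0 = p₀` and
`some (Fin.last (t+1)) = p₁`), and `none` is the hub `q`. -/
abbrev BWVert (t : ℕ) := Option (Fin (t + 2))

/-- Adjacency in the broken wheel: the hub `q` is adjacent to every path vertex, and
two path vertices are adjacent exactly when they are consecutive. -/
def bwAdj (t : ℕ) : BWVert t → BWVert t → Prop
  | none, none => False
  | none, some _ => True
  | some _, none => True
  | some i, some j => i.val + 1 = j.val ∨ j.val + 1 = i.val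

/-- An `L`-coloring of (all of) the broken wheel. -/
def IsBWColoring (t : ℕ) (L : BWVert t → Finset ℕ) (c : BWVert t → ℕ) : Prop :=
  (∀ v, c v ∈ L v) ∧ ∀ v w, bwAdj t v w → c v ≠ c w

/-- `(a, b, cc)` is an `L`-coloring of the principal path `P = p₀ q p₁` (colors listed
in the order `p₀, q, p₁`); note that `p₀` and `p₁` are themselves adjacent exactly when
`t = 0`. -/
def IsPColoring (t : ℕ) (L : BWVert t → Finset ℕ) (a b cc : ℕ) : Prop :=
  a ∈ L (some 0) ∧ b ∈ L none ∧ cc ∈ L (some (Fin.last (t + 1))) ∧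
  a ≠ b ∧ b ≠ cc ∧ (bwAdj t (some 0) (some (Fin.last (t + 1))) → a ≠ cc)

/-- The coloring `a, b, cc` of `p₀, q, p₁` extends to an `L`-coloring of the whole
broken wheel. -/
def ExtendsToBW (t : ℕ) (L : BWVert t → Finset ℕ) (a b cc : ℕ) : Prop :=
  ∃ c : BWVert t → ℕ, IsBWColoring t L c ∧
    c (some 0) = a ∧ c none = b ∧ c (some (Fin.last (t + 1))) = cc

namespace BWP

def fp (t : ℕ) (n : ℕ) : Fin (t+2) := ⟨n % (t+2), Nat.mod_lt _ (by omega)⟩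

def Lc (t : ℕ) (L : BWVert t → Finset ℕ) (n : ℕ) : Finset ℕ := L (some (fp t n))

lemma fp_zero (t : ℕ) : fp t 0 = 0 := by
  simp [fp, Fin.ext_iff]

lemma fp_last (t : ℕ) : fp t (t+1) = Fin.last (t+1) := by
  simp [fp, Fin.ext_iff, Nat.mod_eq_of_lt]

lemma fp_val (t : ℕ) {n : ℕ} (h : n ≤ t+1) : (fp t n).val = n := by
  simp [fp, Nat.mod_eq_of_lt (by omega : n < t + 2)]

lemma fp_coe (t : ℕ) (i : Fin (t+2)) : fp t i.val = i := by
  simp [fp, Fin.ext_iff, Nat.mod_eq_of_lt i.isLt]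

def A (t : ℕ) (L : BWVert t → Finset ℕ) (x y : ℕ) : ℕ → Finset ℕ
  | 0 => {x}
  | n+1 => (Lc t L (n+1) \ {y}).filter (fun c => ∃ d ∈ A t L x y n, d ≠ c)

/-- From membership in `A n`, build a partial coloring of path vertices `0..n`. -/
lemma A_partial (t : ℕ) (L : BWVert t → Finset ℕ) (x y : ℕ) :
    ∀ n, ∀ c ∈ A t L x y n, ∃ f : ℕ → ℕ, f 0 = x ∧ f n = c ∧
      (∀ i, 1 ≤ i → i ≤ n → f i ∈ Lc t L i ∧ f i ≠ y) ∧
      (∀ i, i < n → f i ≠ f (i+1)) := by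
  intro n
  induction n with
  | zero =>
    intro c hc
    simp [A] at hc
    exact ⟨fun _ => x, rfl, by simp [hc], by omega, by omega⟩
  | succ n ih =>
    intro c hc
    simp only [A, Finset.mem_filter, Finset.mem_sdiff, Finset.mem_singleton] at hc
    obtain ⟨⟨hcL, hcy⟩, d, hd, hdc⟩ := hc
    obtain ⟨f, hf0, hfn, hfmem, hfadj⟩ := ih d hd
    refine ⟨fun i => if i ≤ n then f i else c, by simp [hf0], by simp, ?_, ?_⟩
    · intro i h1 h2
      by_cases h : i ≤ n
      · simp only [if_pos h]; exact hfmem i h1 h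
      · have hi : i = n + 1 := by omega
        rw [hi]
        simp only [if_neg (by omega : ¬ n + 1 ≤ n)]
        exact ⟨hcL, hcy⟩
    · intro i hi
      by_cases h : i < n
      · simp only [if_pos (by omega : i ≤ n), if_pos (by omega : i + 1 ≤ n)]
        exact hfadj i h
      · have hi : i = n := by omega
        rw [hi]
        simp only [if_pos le_rfl, if_neg (by omega : ¬ n + 1 ≤ n), hfn]
        exact hdc

lemma extend_of_A (t : ℕ) (L : BWVert t → Finset ℕ) (x y z : ℕ)
    (hx : x ∈ L (some 0)) (hy : y ∈ L none) (hz : z ∈ L (some (Fin.last (t+1))))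
    (hxy : x ≠ y) (hyz : y ≠ z)
    (h : ∃ d ∈ A t L x y t, d ≠ z) : ExtendsToBW t L x y z := by
  obtain ⟨d, hd, hdz⟩ := h
  obtain ⟨f, hf0, hft, hfmem, hfadj⟩ := A_partial t L x y t d hd
  set g : ℕ → ℕ := fun i => if i ≤ t then f i else z with hg
  have hg0 : g 0 = x := by simp [hg, hf0]
  have hgt1 : g (t+1) = z := by simp [hg]
  have hgmem : ∀ i : Fin (t+2), g i.val ∈ L (some i) := by
    intro i
    rcases Nat.lt_or_ge i.val 1 with h1 | h1
    · have : i = 0 := by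
        apply Fin.ext; rw [Fin.val_zero]; omega
      subst this
      simpa [hg, hf0] using hx
    rcases Nat.lt_or_ge (i.val) (t+1) with h2 | h2
    · have hle : i.val ≤ t := by omega
      have := (hfmem i.val h1 hle).1
      simp only [hg, if_pos hle]
      simpa [Lc, fp_coe] using this
    · have : i = Fin.last (t+1) := by
        apply Fin.ext; simp [Fin.last]; omega
      subst this
      simpa [hg, Fin.last] using hz
  have hgy : ∀ i : Fin (t+2), g i.val ≠ y := by
    intro i
    rcases Nat.lt_or_ge i.val 1 with h1 | h1
    · have : i.val = 0 := by omega
      rw [this, hg0]; exact hxy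
    rcases Nat.lt_or_ge (i.val) (t+1) with h2 | h2
    · have hle : i.val ≤ t := by omega
      have := (hfmem i.val h1 hle).2
      simpa [hg, if_pos hle] using this
    · have : i.val = t + 1 := by omega
      rw [this, hgt1]; exact fun h => hyz h.symm
  have hgadj : ∀ i : ℕ, i < t + 1 → g i ≠ g (i+1) := by
    intro i hi
    rcases Nat.lt_or_ge i t with h | h
    · simpa [hg, if_pos (le_of_lt h), if_pos (by omega : i + 1 ≤ t)] using hfadj i h
    · have : i = t := by omega
      subst this
      simpa [hg, hft] using hdz
  refine ⟨fun v => match v with | none => y | some i => g i.val, ⟨?_, ?_⟩, ?_, rfl, ?_⟩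
  · intro v
    match v with
    | none => exact hy
    | some i => exact hgmem i
  · intro v w hvw
    match v, w with
    | none, none => exact absurd hvw id
    | none, some i => exact fun h => hgy i h.symm
    | some i, none => exact hgy i
    | some i, some j =>
      show g i.val ≠ g j.val
      rcases hvw with h | h
      · have hj : j.val = i.val + 1 := h.symm
        rw [hj]; exact hgadj i.val (by omega)
      · have hi2 : i.val = j.val + 1 := h.symm
        rw [hi2]; exact fun heq => hgadj j.val (by omega) heq.symm
  · show g (0 : Fin (t+2)).val = x
    simp [hg0]
  · show g (Fin.last (t+1)).val = z
    simpa [Fin.last] using hgt1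


lemma A_nonempty (t : ℕ) (L : BWVert t → Finset ℕ) (x y : ℕ)
    (hcard : ∀ n, 1 ≤ n → n ≤ t → 2 ≤ (Lc t L n \ {y}).card) :
    ∀ n ≤ t, (A t L x y n).Nonempty := by
  intro n
  induction n with
  | zero => intro _; exact ⟨x, by simp [A]⟩
  | succ n ih =>
    intro h
    obtain ⟨d, hd⟩ := ih (by omega)
    have h2 := hcard (n+1) (by omega) h
    obtain ⟨c, hc, hcd⟩ : ∃ c ∈ Lc t L (n+1) \ {y}, c ≠ d := by
      by_contra hcon
      push_neg at hcon
      have hsub : Lc t L (n+1) \ {y} ⊆ {d} := fun c hc => Finset.mem_singleton.2 (hcon c hc)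
      have := Finset.card_le_card hsub
      simp only [Finset.card_singleton] at this
      omega
    refine ⟨c, ?_⟩
    simp only [A, Finset.mem_filter]
    exact ⟨hc, d, hd, fun h => hcd h.symm⟩

lemma blocked_struct (t : ℕ) (L : BWVert t → Finset ℕ) (x y z : ℕ)
    (hx : x ∈ L (some 0)) (hy : y ∈ L none) (hz : z ∈ L (some (Fin.last (t+1))))
    (hxy : x ≠ y) (hyz : y ≠ z)
    (hL3 : ∀ n, 1 ≤ n → n ≤ t → 3 ≤ (Lc t L n).card)
    (hnot : ¬ ExtendsToBW t L x y z) :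
    ∃ d : ℕ → ℕ, d 0 = x ∧ d t = z ∧ ∀ n, 1 ≤ n → n ≤ t →
      (y ∈ Lc t L n ∧ Lc t L n \ {y} = {d (n-1), d n} ∧ d (n-1) ≠ d n) := by
  have hcard2 : ∀ n, 1 ≤ n → n ≤ t → 2 ≤ (Lc t L n \ {y}).card := by
    intro n h1 h2
    have h3 := hL3 n h1 h2
    have hsub : Lc t L n ⊆ (Lc t L n \ {y}) ∪ {y} := by
      intro c hc
      by_cases h : c = y
      · simp [h]
      · simp [Finset.mem_union, Finset.mem_sdiff, hc, h]
    have := Finset.card_le_card hsub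
    have := Finset.card_union_le (Lc t L n \ {y}) {y}
    simp only [Finset.card_singleton] at this
    omega
  have hne : ∀ n ≤ t, (A t L x y n).Nonempty := A_nonempty t L x y hcard2
  have hAt : A t L x y t = {z} := by
    obtain ⟨d, hd⟩ := hne t le_rfl
    have hdz : d = z := by
      by_contra hdz
      exact hnot (extend_of_A t L x y z hx hy hz hxy hyz ⟨d, hd, hdz⟩)
    refine Finset.eq_singleton_iff_unique_mem.2 ⟨hdz ▸ hd, fun w hw => ?_⟩
    by_contra hwz
    exact hnot (extend_of_A t L x y z hx hy hz hxy hyz ⟨w, hw, hwz⟩)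
  have claim : ∀ k, k ≤ t → (A t L x y (t - k)).card = 1 := by
    intro k
    induction k with
    | zero => intro _; simp [hAt]
    | succ k ih =>
      intro hk
      have hm1 : (A t L x y (t - k)).card = 1 := ih (by omega)
      set m := t - (k+1) with hm
      have hmk : t - k = m + 1 := by omega
      rw [hmk] at hm1
      have hml : m + 1 ≤ t := by omega
      have hnem : (A t L x y m).Nonempty := hne m (by omega)
      rcases Nat.lt_or_ge (A t L x y m).card 2 with h | h
      · have := Finset.card_pos.2 hnem; omega
      · exfalso
        obtain ⟨d₁, hd₁, d₂, hd₂, hdd⟩ := Finset.one_lt_card.1 h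
        have hsub : Lc t L (m+1) \ {y} ⊆ A t L x y (m+1) := by
          intro c hc
          simp only [A, Finset.mem_filter]
          refine ⟨hc, ?_⟩
          by_cases h1 : d₁ = c
          · exact ⟨d₂, hd₂, by rw [← h1]; exact fun h => hdd h.symm⟩
          · exact ⟨d₁, hd₁, h1⟩
        have := Finset.card_le_card hsub
        have := hcard2 (m+1) (by omega) hml
        omega
  have hsing : ∀ n ≤ t, (A t L x y n).card = 1 := by
    intro n hn
    have := claim (t - n) (by omega)
    rwa [show t - (t - n) = n by omega] at this
  classical
  set d : ℕ → ℕ := fun n => if h : (A t L x y n).Nonempty then (A t L x y n).min' h else 0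
    with hd
  have hAd : ∀ n ≤ t, A t L x y n = {d n} := by
    intro n hn
    obtain ⟨b, hb⟩ := Finset.card_eq_one.1 (hsing n hn)
    have : d n = b := by
      simp only [hd, dif_pos (hne n hn), hb]
      exact Finset.min'_singleton b
    rw [this, hb]
  have hd0 : d 0 = x := by
    have h := hAd 0 (by omega)
    simp only [A] at h
    exact (Finset.singleton_inj.1 h.symm)
  have hdt : d t = z := by
    have h := hAd t le_rfl
    rw [hAt] at h
    exact Finset.singleton_inj.1 h.symm
  refine ⟨d, hd0, hdt, fun n h1 h2 => ?_⟩
  have hn1 : n = (n - 1) + 1 := by omega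
  have hprev : A t L x y (n-1) = {d (n-1)} := hAd (n-1) (by omega)
  have hcur : A t L x y n = {d n} := hAd n h2
  have hmemdn : d n ∈ A t L x y n := by rw [hcur]; exact Finset.mem_singleton_self _
  rw [hn1] at hmemdn
  simp only [A, Finset.mem_filter, hprev, Finset.mem_singleton] at hmemdn
  obtain ⟨hdnmem, e, he, hene⟩ := hmemdn
  subst he
  rw [← hn1] at hdnmem hene
  have hneq : d (n-1) ≠ d n := hene
  have hsub : Lc t L n \ {y} ⊆ ({d (n-1), d n} : Finset ℕ) := by
    intro c hc
    by_cases hcd : c = d (n-1)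
    · simp [hcd]
    · have : c ∈ A t L x y n := by
        rw [hn1]
        simp only [A, Finset.mem_filter, hprev, Finset.mem_singleton]
        rw [← hn1]
        exact ⟨hc, d (n-1), rfl, fun h => hcd h.symm⟩
      rw [hcur, Finset.mem_singleton] at this
      simp [this]
  have heq : Lc t L n \ {y} = {d (n-1), d n} := by
    apply Finset.eq_of_subset_of_card_le hsub
    have := Finset.card_insert_le (d (n-1)) ({d n} : Finset ℕ)
    have := hcard2 n h1 h2
    simp only [Finset.card_singleton] at *
    omega
  refine ⟨?_, heq, hneq⟩
  by_contra hyn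
  have hself : Lc t L n \ {y} = Lc t L n := by
    apply Finset.sdiff_eq_self_iff_disjoint.2
    simpa using hyn
  have h3 := hL3 n h1 h2
  rw [hself] at heq
  have := Finset.card_insert_le (d (n-1)) ({d n} : Finset ℕ)
  rw [heq] at h3
  simp only [Finset.card_singleton] at this
  omega


/-- Two chains with the same pair-sets and the same start agree. -/
lemma chain_unique (t : ℕ) (P : ℕ → Finset ℕ) (c e : ℕ → ℕ) (h0 : e 0 = c 0)
    (hc : ∀ n, 1 ≤ n → n ≤ t → P n = {c (n-1), c n} ∧ c (n-1) ≠ c n)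
    (he : ∀ n, 1 ≤ n → n ≤ t → P n = {e (n-1), e n} ∧ e (n-1) ≠ e n) :
    ∀ n ≤ t, e n = c n := by
  intro n
  induction n with
  | zero => intro _; exact h0
  | succ n ih =>
    intro h
    have hen : e n = c n := ih (by omega)
    obtain ⟨hceq, hcne⟩ := hc (n+1) (by omega) h
    obtain ⟨heeq, hene⟩ := he (n+1) (by omega) h
    simp only [Nat.add_sub_cancel] at hceq hcne heeq hene
    have : e (n+1) ∈ ({c n, c (n+1)} : Finset ℕ) := by
      rw [← hceq, heeq]
      simp
    simp only [Finset.mem_insert, Finset.mem_singleton] at this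
    rcases this with h1 | h1
    · exact absurd (h1.trans hen.symm).symm hene
    · exact h1

/-- The parity structure of two blocked chains. -/
lemma two_chains (t a s s' : ℕ) (Lcn : ℕ → Finset ℕ) (hss' : s ≠ s')
    (has : a ≠ s) (has' : a ≠ s')
    (c c' : ℕ → ℕ) (hc0 : c 0 = a) (hc'0 : c' 0 = a)
    (hc : ∀ n, 1 ≤ n → n ≤ t →
      s ∈ Lcn n ∧ Lcn n \ {s} = {c (n-1), c n} ∧ c (n-1) ≠ c n)
    (hc' : ∀ n, 1 ≤ n → n ≤ t →
      s' ∈ Lcn n ∧ Lcn n \ {s'} = {c' (n-1), c' n} ∧ c' (n-1) ≠ c' n) :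
    ∀ n ≤ t, (n % 2 = 0 → c n = c' n ∧ c n ≠ s ∧ c n ≠ s') ∧
      (n % 2 = 1 → c n = s' ∧ c' n = s) := by
  intro n
  induction n with
  | zero =>
    intro _
    refine ⟨fun _ => ⟨hc0.trans hc'0.symm, hc0 ▸ has, hc0 ▸ has'⟩, fun h => by omega⟩
  | succ n ih =>
    intro h
    have ihn := ih (by omega)
    obtain ⟨hsmem, hceq, hcne⟩ := hc (n+1) (by omega) h
    obtain ⟨hs'mem, hc'eq, hc'ne⟩ := hc' (n+1) (by omega) h
    simp only [Nat.add_sub_cancel] at hceq hcne hc'eq hc'ne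
    have hs'in : s' ∈ ({c n, c (n+1)} : Finset ℕ) := by
      rw [← hceq]
      simp [Finset.mem_sdiff, hs'mem, hss'.symm]
    have hsin : s ∈ ({c' n, c' (n+1)} : Finset ℕ) := by
      rw [← hc'eq]
      simp [Finset.mem_sdiff, hsmem, hss']
    simp only [Finset.mem_insert, Finset.mem_singleton] at hs'in hsin
    have hcns : c (n+1) ≠ s := by
      intro hh
      have : c (n+1) ∈ Lcn (n+1) \ {s} := by rw [hceq]; simp
      simp [Finset.mem_sdiff, hh] at this
    have hc'ns' : c' (n+1) ≠ s' := by
      intro hh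
      have : c' (n+1) ∈ Lcn (n+1) \ {s'} := by rw [hc'eq]; simp
      simp [Finset.mem_sdiff, hh] at this
    rcases Nat.even_or_odd n with hpar | hpar
    · -- n even, n+1 odd
      have hn0 : n % 2 = 0 := Nat.even_iff.1 hpar
      obtain ⟨hcc', hcs, hcs'⟩ := ihn.1 hn0
      have h1 : c (n+1) = s' := by
        rcases hs'in with h1 | h1
        · exact absurd h1.symm hcs'
        · exact h1.symm
      have h2 : c' (n+1) = s := by
        rcases hsin with h2 | h2
        · rw [← hcc'] at h2; exact absurd h2.symm hcs
        · exact h2.symm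
      exact ⟨fun hh => by omega, fun _ => ⟨h1, h2⟩⟩
    · -- n odd, n+1 even
      have hn1 : n % 2 = 1 := Nat.odd_iff.1 hpar
      obtain ⟨hcn, hc'n⟩ := ihn.2 hn1
      have hcns' : c (n+1) ≠ s' := by rw [← hcn]; exact fun hh => hcne hh.symm
      have hc'ns : c' (n+1) ≠ s := by rw [← hc'n]; exact fun hh => hc'ne hh.symm
      have hc'mem : c' (n+1) ∈ Lcn (n+1) := by
        have : c' (n+1) ∈ Lcn (n+1) \ {s'} := by rw [hc'eq]; simp
        exact (Finset.mem_sdiff.1 this).1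
      have : c' (n+1) ∈ ({c n, c (n+1)} : Finset ℕ) := by
        rw [← hceq]
        simp [Finset.mem_sdiff, hc'mem, hc'ns]
      simp only [Finset.mem_insert, Finset.mem_singleton] at this
      rcases this with h1 | h1
      · rw [hcn] at h1; exact absurd h1 hc'ns'
      · refine ⟨fun _ => ⟨h1.symm, hcns, hcns'⟩, fun hh => by omega⟩

/-- Case analysis when the non-extendable `ψ` uses hub color `s`. -/
lemma case_eq_hub (t a s s' x z : ℕ) (Lcn : ℕ → Finset ℕ)
    (has' : a ≠ s')
    (ht : 1 ≤ t) (hte : t % 2 = 0)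
    (c : ℕ → ℕ) (hc0 : c 0 = a)
    (hc : ∀ n, 1 ≤ n → n ≤ t → Lcn n \ {s} = {c (n-1), c n} ∧ c (n-1) ≠ c n)
    (hpar : ∀ n ≤ t, (n % 2 = 0 → c n ≠ s ∧ c n ≠ s') ∧ (n % 2 = 1 → c n = s'))
    (e : ℕ → ℕ) (he0 : e 0 = x) (het : e t = z)
    (he : ∀ n, 1 ≤ n → n ≤ t → Lcn n \ {s} = {e (n-1), e n} ∧ e (n-1) ≠ e n) :
    (x = a ∧ z = c t) ∨ (x = s' ∧ z = s') := by
  have hc1 : c 1 = s' := (hpar 1 ht).2 rfl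
  -- x ∈ {a, s'}
  have hx : x = a ∨ x = s' := by
    obtain ⟨heeq, _⟩ := he 1 le_rfl ht
    obtain ⟨hceq, _⟩ := hc 1 le_rfl ht
    have : e 0 ∈ ({c 0, c 1} : Finset ℕ) := by
      rw [← hceq, heeq]; simp
    simp only [Finset.mem_insert, Finset.mem_singleton, he0, hc0, hc1] at this
    exact this
  rcases hx with hx | hx
  · -- x = a : chain is unique, z = c t
    left
    have := chain_unique t (fun n => Lcn n \ {s}) c e (by rw [he0, hc0, hx]) hc he t le_rfl
    exact ⟨hx, by rw [← het, this]⟩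
  · -- x = s'
    right
    have hclaim : ∀ n ≤ t, (n % 2 = 0 → e n = s') ∧ (n % 2 = 1 → e n ≠ s ∧ e n ≠ s') := by
      intro n
      induction n with
      | zero => exact fun _ => ⟨fun _ => by rw [he0, hx], fun h => by omega⟩
      | succ n ih =>
        intro h
        have ihn := ih (by omega)
        obtain ⟨heeq, hene⟩ := he (n+1) (by omega) h
        simp only [Nat.add_sub_cancel] at heeq hene
        obtain ⟨hceq, hcne⟩ := hc (n+1) (by omega) h
        simp only [Nat.add_sub_cancel] at hceq hcne
        have hens : e (n+1) ≠ s := by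
          intro hh
          have : e (n+1) ∈ Lcn (n+1) \ {s} := by rw [heeq]; simp
          simp [Finset.mem_sdiff, hh] at this
        rcases Nat.even_or_odd n with hpn | hpn
        · -- n even, n+1 odd
          have hn0 : n % 2 = 0 := Nat.even_iff.1 hpn
          have hen : e n = s' := ihn.1 hn0
          exact ⟨fun hh => by omega,
            fun _ => ⟨hens, by rw [← hen]; exact fun hh => hene hh.symm⟩⟩
        · -- n odd, n+1 even
          have hn1 : n % 2 = 1 := Nat.odd_iff.1 hpn
          obtain ⟨hens', hens''⟩ := ihn.2 hn1
          have hcn : c n = s' := (hpar n (by omega)).2 hn1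
          -- Lcn (n+1) \ {s} = {s', c (n+1)}; e n in it, e n ≠ s' so e n = c (n+1)
          have hein : e n ∈ ({c n, c (n+1)} : Finset ℕ) := by
            rw [← hceq, heeq]; simp
          simp only [Finset.mem_insert, Finset.mem_singleton, hcn] at hein
          have hen : e n = c (n+1) := by
            rcases hein with h1 | h1
            · exact absurd h1 hens''
            · exact h1
          have hein1 : e (n+1) ∈ ({c n, c (n+1)} : Finset ℕ) := by
            rw [← hceq, heeq]; simp
          simp only [Finset.mem_insert, Finset.mem_singleton, hcn] at hein1
          refine ⟨fun _ => ?_, fun hh => by omega⟩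
          rcases hein1 with h1 | h1
          · exact h1
          · rw [← hen] at h1; exact absurd h1.symm hene
    have := (hclaim t le_rfl).1 hte
    rw [het] at this
    exact ⟨hx, this⟩

/-- Case analysis when the non-extendable `ψ` uses a hub color other than `s, s'`. -/
lemma case_other (t s s' x z : ℕ) (hss' : s ≠ s') (ht : 1 ≤ t) (hte : t % 2 = 0)
    (e : ℕ → ℕ) (he0 : e 0 = x) (het : e t = z)
    (hmem : ∀ n, 1 ≤ n → n ≤ t →
      (s = e (n-1) ∨ s = e n) ∧ (s' = e (n-1) ∨ s' = e n) ∧ e (n-1) ≠ e n) :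
    x = z ∧ (x = s ∨ x = s') := by
  have hpt : ∀ n, 1 ≤ n → n ≤ t →
      (e (n-1) = s ∨ e (n-1) = s') ∧ (e n = s ∨ e n = s') := by
    intro n h1 h2
    obtain ⟨hs, hs', hne⟩ := hmem n h1 h2
    rcases hs with hs | hs <;> rcases hs' with h's | h's
    · exact absurd (hs.trans h's.symm) hss'
    · exact ⟨Or.inl hs.symm, Or.inr h's.symm⟩
    · exact ⟨Or.inr h's.symm, Or.inl hs.symm⟩
    · exact absurd (hs.trans h's.symm) hss'
  have hx : x = s ∨ x = s' := by
    have := (hpt 1 le_rfl ht).1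
    simpa [he0] using this
  set x' : ℕ := if x = s then s' else s with hx'
  have hpair : ∀ w, (w = s ∨ w = s') → w ≠ x → w = x' := by
    intro w hw hwx
    rcases hx with h | h
    · have hx'2 : x' = s' := by rw [hx', if_pos h]
      rcases hw with h2 | h2
      · exact absurd (h2.trans h.symm) hwx
      · rw [h2, hx'2]
    · have hxs : x ≠ s := fun hh => hss' (hh.symm.trans h)
      have hx'2 : x' = s := by rw [hx', if_neg hxs]
      rcases hw with h2 | h2
      · rw [h2, hx'2]
      · exact absurd (h2.trans h.symm) hwx
  have hpair' : ∀ w, (w = s ∨ w = s') → w ≠ x' → w = x := by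
    intro w hw hwx
    rcases hx with h | h
    · have hx'2 : x' = s' := by rw [hx', if_pos h]
      rcases hw with h2 | h2
      · rw [h2, h]
      · exact absurd (h2.trans hx'2.symm) hwx
    · have hxs : x ≠ s := fun hh => hss' (hh.symm.trans h)
      have hx'2 : x' = s := by rw [hx', if_neg hxs]
      rcases hw with h2 | h2
      · exact absurd (h2.trans hx'2.symm) hwx
      · rw [h2, h]
  have hclaim : ∀ n ≤ t, (n % 2 = 0 → e n = x) ∧ (n % 2 = 1 → e n = x') := by
    intro n
    induction n with
    | zero => exact fun _ => ⟨fun _ => he0, fun h => by omega⟩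
    | succ n ih =>
      intro h
      have ihn := ih (by omega)
      obtain ⟨hen1, hen2⟩ := hpt (n+1) (by omega) h
      simp only [Nat.add_sub_cancel] at hen1
      have hne : e n ≠ e (n+1) := by
        have := (hmem (n+1) (by omega) h).2.2
        simpa using this
      rcases Nat.even_or_odd n with hpn | hpn
      · have hn0 : n % 2 = 0 := Nat.even_iff.1 hpn
        have hen : e n = x := ihn.1 hn0
        refine ⟨fun hh => by omega, fun _ => ?_⟩
        apply hpair _ hen2
        rw [← hen]; exact fun hh => hne hh.symm
      · have hn1 : n % 2 = 1 := Nat.odd_iff.1 hpn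
        have hen : e n = x' := ihn.2 hn1
        refine ⟨fun _ => ?_, fun hh => by omega⟩
        refine hpair' _ hen2 fun hh => hne ?_
        rw [hen, hh]
  have := (hclaim t le_rfl).1 hte
  rw [het] at this
  exact ⟨this ▸ rfl, hx⟩

end BWP

/-- Proposition 2.8(3): if `φ` is an `L`-coloring of `{p₀, p₁}` (with colors `a, cc`)
and `S ⊆ L(q) \ {a, cc}` has `|S| ≥ 2` and no `s ∈ S` yields an `L`-coloring of `G`
via `a, s, cc` on `p₀, q, p₁`, then `|S| = 2`, the path `G - q` has an odd number of
edges, and every non-extendable `L`-coloring `ψ` of `V(P)` either uses the same color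
`s ∈ S` on both `p₀` and `p₁`, or restricts to `φ` on `{p₀, p₁}`. -/
theorem bwheel_blocked_middle_set (t : ℕ) (L : BWVert t → Finset ℕ)
    (hL : ∀ v : BWVert t, v ≠ some 0 → v ≠ none → v ≠ some (Fin.last (t + 1)) →
      3 ≤ (L v).card)
    (h0 : (L (some 0)).Nonempty) (h1 : (L (some (Fin.last (t + 1)))).Nonempty)
    (a cc : ℕ) (ha : a ∈ L (some 0)) (hcc : cc ∈ L (some (Fin.last (t + 1))))
    (hprop : bwAdj t (some 0) (some (Fin.last (t + 1))) → a ≠ cc)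
    (S : Finset ℕ) (hSsub : S ⊆ L none) (hSne : ∀ s ∈ S, s ≠ a ∧ s ≠ cc)
    (hScard : 2 ≤ S.card)
    (hSblocked : ∀ s ∈ S, ¬ ExtendsToBW t L a s cc) :
    S.card = 2 ∧ Odd (t + 1) ∧
    ∀ x y z : ℕ, IsPColoring t L x y z → ¬ ExtendsToBW t L x y z →
      (∃ s ∈ S, x = s ∧ z = s) ∨ (x = a ∧ z = cc) := by
  classical
  obtain ⟨s, hsS, s', hs'S, hss'⟩ := Finset.one_lt_card.1 (by omega : 1 < S.card)
  have hL3 : ∀ n, 1 ≤ n → n ≤ t → 3 ≤ (BWP.Lc t L n).card := by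
    intro n h1 h2
    apply hL
    · intro hcon
      have := congrArg Fin.val (Option.some_injective _ hcon)
      rw [BWP.fp_val t (by omega)] at this
      simp at this
      omega
    · simp [BWP.Lc]
    · intro hcon
      have := congrArg Fin.val (Option.some_injective _ hcon)
      rw [BWP.fp_val t (by omega)] at this
      simp [Fin.last] at this
      omega
  have key : ∀ u ∈ S, ∃ d : ℕ → ℕ, d 0 = a ∧ d t = cc ∧ ∀ n, 1 ≤ n → n ≤ t →
      (u ∈ BWP.Lc t L n ∧ BWP.Lc t L n \ {u} = {d (n-1), d n} ∧ d (n-1) ≠ d n) :=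
    fun u hu => BWP.blocked_struct t L a u cc ha (hSsub hu) hcc
      (Ne.symm (hSne u hu).1) (hSne u hu).2 hL3 (hSblocked u hu)
  obtain ⟨c, hc0, hct, hcf⟩ := key s hsS
  obtain ⟨c', hc'0, hc't, hc'f⟩ := key s' hs'S
  have ht1 : 1 ≤ t := by
    by_contra hcon
    have ht0 : t = 0 := by omega
    subst ht0
    exact hprop (by simp [bwAdj, Fin.last]) (hc0.symm.trans hct)
  have hpar := BWP.two_chains t a s s' (BWP.Lc t L) hss'
    (Ne.symm (hSne s hsS).1) (Ne.symm (hSne s' hs'S).1) c c' hc0 hc'0 hcf hc'f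
  have hteven : t % 2 = 0 := by
    rcases Nat.even_or_odd t with h | h
    · exact Nat.even_iff.1 h
    · exfalso
      apply (hSne s' hs'S).2
      rw [← ((hpar t le_rfl).2 (Nat.odd_iff.1 h)).1, hct]
  have hc1 : c 1 = s' := ((hpar 1 ht1).2 (by norm_num)).1
  have hSsub2 : S ⊆ {s, s'} := by
    intro u hu
    obtain ⟨d, hd0, hdt, hdf⟩ := key u hu
    have huLc : u ∈ BWP.Lc t L 1 := (hdf 1 le_rfl ht1).1
    obtain ⟨hsmem, hceq, _⟩ := hcf 1 le_rfl ht1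
    simp only [Finset.mem_insert, Finset.mem_singleton]
    by_cases hus : u = s
    · exact Or.inl hus
    · have hmem : u ∈ BWP.Lc t L 1 \ {s} := Finset.mem_sdiff.2 ⟨huLc, by simp [hus]⟩
      rw [hceq] at hmem
      simp only [Finset.mem_insert, Finset.mem_singleton] at hmem
      rcases hmem with h | h
      · exact absurd (h.trans hc0) (hSne u hu).1
      · exact Or.inr (h.trans hc1)
  have hScard2 : S.card = 2 := by
    have h1 := Finset.card_le_card hSsub2
    have h2 := Finset.card_insert_le s ({s'} : Finset ℕ)
    simp only [Finset.card_singleton] at h2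
    omega
  refine ⟨hScard2, Nat.odd_iff.2 (by omega), ?_⟩
  intro x y z hP hnotext
  obtain ⟨hxL, hyL, hzL, hxy, hyz, hxz⟩ := hP
  obtain ⟨e, he0, het, hef⟩ := BWP.blocked_struct t L x y z hxL hyL hzL hxy hyz hL3 hnotext
  by_cases hys : y = s
  · subst hys
    have hres := BWP.case_eq_hub t a y s' x z (BWP.Lc t L) (Ne.symm (hSne s' hs'S).1)
      ht1 hteven c hc0 (fun n h1 h2 => (hcf n h1 h2).2)
      (fun n hn => ⟨fun hh => ⟨((hpar n hn).1 hh).2.1, ((hpar n hn).1 hh).2.2⟩,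
        fun hh => ((hpar n hn).2 hh).1⟩)
      e he0 het (fun n h1 h2 => (hef n h1 h2).2)
    rcases hres with ⟨hxa, hzc⟩ | ⟨hxs', hzs'⟩
    · right; exact ⟨hxa, by rw [hzc, hct]⟩
    · left; exact ⟨s', hs'S, hxs', hzs'⟩
  · by_cases hys' : y = s'
    · subst hys'
      have hres := BWP.case_eq_hub t a y s x z (BWP.Lc t L) (Ne.symm (hSne s hsS).1)
        ht1 hteven c' hc'0 (fun n h1 h2 => (hc'f n h1 h2).2)
        (fun n hn => ⟨fun hh => ⟨by rw [← ((hpar n hn).1 hh).1]; exact ((hpar n hn).1 hh).2.2,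
            by rw [← ((hpar n hn).1 hh).1]; exact ((hpar n hn).1 hh).2.1⟩,
          fun hh => ((hpar n hn).2 hh).2⟩)
        e he0 het (fun n h1 h2 => (hef n h1 h2).2)
      rcases hres with ⟨hxa, hzc⟩ | ⟨hxs, hzs⟩
      · right
        refine ⟨hxa, ?_⟩
        rw [hzc, ← ((hpar t le_rfl).1 hteven).1, hct]
      · left; exact ⟨s, hsS, hxs, hzs⟩
    · have hres := BWP.case_other t s s' x z hss' ht1 hteven e he0 het ?_
      · rcases hres with ⟨hxz2, hx | hx⟩
        · left; exact ⟨s, hsS, hx, by rw [← hxz2, hx]⟩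
        · left; exact ⟨s', hs'S, hx, by rw [← hxz2, hx]⟩
      · intro n h1 h2
        obtain ⟨hyn, heq, hne⟩ := hef n h1 h2
        have hsmem : s ∈ BWP.Lc t L n := (hcf n h1 h2).1
        have hs'mem : s' ∈ BWP.Lc t L n := (hc'f n h1 h2).1
        have hsin : s ∈ ({e (n-1), e n} : Finset ℕ) := by
          rw [← heq]
          exact Finset.mem_sdiff.2 ⟨hsmem, Finset.notMem_singleton.2 fun hh => hys hh.symm⟩
        have hs'in : s' ∈ ({e (n-1), e n} : Finset ℕ) := by
          rw [← heq]
          exact Finset.mem_sdiff.2 ⟨hs'mem, Finset.notMem_singleton.2 fun hh => hys' hh.symm⟩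
        simp only [Finset.mem_insert, Finset.mem_singleton] at hsin hs'in
        exact ⟨hsin, hs'in, hne⟩
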